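/- Let μ = (5 + √21)/2. Let x be an irrational real number not belonging to NICF_5*, with NICF iterates x_0 = x and x_{i+1} = 1/(x_i − ⌊x_i⌉). Then x < 0, or x > 1, or there exists n ≥ 1 such that |x_n| > μ. -/

import Mathlib

open Filter Pointwise

/-- NICF iterates: `x₀ = x`, `x_{i+1} = 1/(x_i - ⌊x_i⌉)`, with `⌊t⌉ = round t = ⌊t + 1/2⌋`. -/
noncomputable def nicfX (x : ℝ) : ℕ → ℝ
  | 0 => x
  | n + 1 => 1 / (nicfX x n - round (nicfX x n))

/-- The `i`-th NICF digit of `x`. -/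
noncomputable def nicfDigit (x : ℝ) (i : ℕ) : ℤ := round (nicfX x i)

/-- The `i`-th NICF digit is genuinely defined: the algorithm has not terminated before
step `i` (i.e. `x_m ≠ a_m` for all `m < i`). -/
def nicfDefined (x : ℝ) (i : ℕ) : Prop :=
  ∀ m, m < i → nicfX x m ≠ (nicfDigit x m : ℝ)

/-- `NICFset r`: the reals all of whose NICF digits `a_i` with `i ≥ 1` satisfy `|a_i| ≤ r`. -/
def NICFset (r : ℤ) : Set ℝ :=
  {x | ∀ i : ℕ, 1 ≤ i → nicfDefined x i → |nicfDigit x i| ≤ r}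

/-- `μ = (5 + √21)/2`. -/
noncomputable def nicfMu : ℝ := (5 + Real.sqrt 21) / 2

/-- `NICF₅*`: the subset of `[0,1]` whose NICF digits obey the `NICF₅*` rules. -/
noncomputable def NICF5star : Set ℝ :=
  {x | x ∈ Set.Icc (0 : ℝ) 1 ∧
    (nicfDigit x 0 = 0 ∨ nicfDigit x 0 = 1) ∧
    (nicfDigit x 0 = 0 → nicfDefined x 1 → nicfDigit x 1 ∈ ({2, 3, 4, 5} : Set ℤ)) ∧
    (nicfDigit x 0 = 1 → nicfDefined x 1 → nicfDigit x 1 ∈ ({-2, -3, -4, -5} : Set ℤ)) ∧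
    (∀ i : ℕ, 1 ≤ i → nicfDefined x i →
      nicfDigit x i ∈ ({-5, -4, -3, -2, 2, 3, 4, 5} : Set ℤ) ∧
      (nicfDigit x i = 2 → nicfDefined x (i + 1) →
        nicfDigit x (i + 1) ∈ ({2, 3, 4, 5} : Set ℤ)) ∧
      (nicfDigit x i = -2 → nicfDefined x (i + 1) →
        nicfDigit x (i + 1) ∈ ({-2, -3, -4, -5} : Set ℤ)) ∧
      (nicfDigit x i = 5 → nicfDefined x (i + 1) →
        nicfDigit x (i + 1) ∈ ({-2, -3, -4, -5} : Set ℤ)) ∧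
      (nicfDigit x i = -5 → nicfDefined x (i + 1) →
        nicfDigit x (i + 1) ∈ ({2, 3, 4, 5} : Set ℤ)))}

lemma nicfX_succ (x : ℝ) (n : ℕ) :
    nicfX x (n + 1) = 1 / (nicfX x n - round (nicfX x n)) := rfl

lemma nicfX_irrational (x : ℝ) (hx : Irrational x) : ∀ n, Irrational (nicfX x n)
  | 0 => hx
  | n + 1 => by
    rw [nicfX_succ, one_div]
    exact ((nicfX_irrational x hx n).sub_intCast _).inv

lemma frac_lt_half {y : ℝ} (hy : Irrational y) : |y - round y| < 1/2 := by
  rcases lt_or_eq_of_le (abs_sub_round y) with h | h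
  · exact h
  · exfalso
    rcases abs_eq (by norm_num : (0:ℝ) ≤ 1/2) |>.1 h with h' | h'
    · exact (hy.sub_intCast (round y)) ⟨1/2, by push_cast; linarith⟩
    · exact (hy.sub_intCast (round y)) ⟨-(1/2), by push_cast; linarith⟩

lemma frac_ne_zero {y : ℝ} (hy : Irrational y) : y - round y ≠ 0 := by
  intro h
  exact hy.ne_int (round y) (by linarith)

lemma next_pos {x : ℝ} (hx : Irrational x) (n : ℕ)
    (hpos : (round (nicfX x n) : ℝ) < nicfX x n) : 2 < nicfX x (n + 1) := by
  set y := nicfX x n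
  have hy : Irrational y := nicfX_irrational x hx n
  have h1 : 0 < y - round y := by linarith
  have h2 : y - round y < 1/2 := by
    have := frac_lt_half hy
    rw [abs_lt] at this; linarith
  rw [nicfX_succ]
  rw [lt_div_iff₀ h1]
  linarith

lemma next_neg {x : ℝ} (hx : Irrational x) (n : ℕ)
    (hneg : nicfX x n < (round (nicfX x n) : ℝ)) : nicfX x (n + 1) < -2 := by
  set y := nicfX x n
  have hy : Irrational y := nicfX_irrational x hx n
  have h1 : y - round y < 0 := by linarith
  have h2 : -(1/2) < y - round y := by
    have := frac_lt_half hy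
    rw [abs_lt] at this; linarith
  rw [nicfX_succ]
  rw [div_lt_iff_of_neg h1]
  linarith

lemma nicfMu_lt_five : nicfMu < 5 := by
  have : Real.sqrt 21 < 5 := by
    have := Real.sq_sqrt (by norm_num : (21:ℝ) ≥ 0)
    nlinarith [Real.sqrt_nonneg 21]
  unfold nicfMu; linarith

lemma round_pos_branch {z : ℝ} (h2 : 2 < z) (hμ : |z| ≤ nicfMu) :
    2 ≤ round z ∧ round z ≤ 5 ∧ z < 5 := by
  have h5 : z < 5 := lt_of_le_of_lt (le_trans (le_abs_self z) hμ) nicfMu_lt_five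
  have hb := abs_sub_round z
  rw [abs_le] at hb
  constructor
  · have : (1 : ℝ) < (round z : ℝ) := by linarith
    exact_mod_cast this
  constructor
  · have : (round z : ℝ) < 6 := by linarith
    exact_mod_cast Int.lt_add_one_iff.mp (by exact_mod_cast this)
  · exact h5

lemma round_neg_branch {z : ℝ} (h2 : z < -2) (hμ : |z| ≤ nicfMu) :
    -5 ≤ round z ∧ round z ≤ -2 ∧ -5 < z := by
  have h5 : -5 < z := by
    have := neg_abs_le z
    have := lt_of_le_of_lt hμ nicfMu_lt_five
    rw [abs_lt] at *
    linarith [(abs_lt.mp (lt_of_le_of_lt (le_refl |z|) (lt_of_le_of_lt hμ nicfMu_lt_five))).1]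
  have hb := abs_sub_round z
  rw [abs_le] at hb
  constructor
  · have : (-6 : ℝ) < (round z : ℝ) := by linarith
    have : (-6 : ℤ) < round z := by exact_mod_cast this
    omega
  constructor
  · have : (round z : ℝ) < -1 := by linarith
    have : round z < -1 := by exact_mod_cast this
    omega
  · exact h5


theorem nicf_iterate_large_of_not_mem_nicf5star (x : ℝ) (hx : Irrational x)
    (h : x ∉ NICF5star) :
    x < 0 ∨ 1 < x ∨ ∃ n : ℕ, 1 ≤ n ∧ nicfMu < |nicfX x n| := by
  by_contra hcon
  push_neg at hcon
  obtain ⟨h0, h1, hμ⟩ := hcon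
  apply h
  have hirr := nicfX_irrational x hx
  have hx0 : 0 < x := lt_of_le_of_ne h0 (fun e => hx.ne_int 0 (by push_cast; linarith))
  have hx1 : x < 1 := lt_of_le_of_ne h1 (fun e => hx.ne_int 1 (by push_cast; linarith))
  have branch : ∀ i : ℕ, 1 ≤ i → (2 < nicfX x i ∨ nicfX x i < -2) := by
    intro i hi
    obtain ⟨j, rfl⟩ := Nat.exists_eq_add_of_le hi
    rw [Nat.add_comm]
    rcases lt_or_gt_of_ne (frac_ne_zero (hirr j)) with hw | hw
    · right; exact next_neg hx j (by linarith)
    · left; exact next_pos hx j (by linarith)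
  have digit_branch : ∀ i : ℕ, 1 ≤ i →
      (2 < nicfX x i ∧ 2 ≤ nicfDigit x i ∧ nicfDigit x i ≤ 5 ∧ nicfX x i < 5) ∨
      (nicfX x i < -2 ∧ -5 ≤ nicfDigit x i ∧ nicfDigit x i ≤ -2 ∧ -5 < nicfX x i) := by
    intro i hi
    rcases branch i hi with hp | hn
    · obtain ⟨g1, g2, g3⟩ := round_pos_branch hp (hμ i hi)
      exact Or.inl ⟨hp, g1, g2, g3⟩
    · obtain ⟨g1, g2, g3⟩ := round_neg_branch hn (hμ i hi)
      exact Or.inr ⟨hn, g1, g2, g3⟩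
  have hdigit : ∀ i : ℕ, nicfDigit x i = round (nicfX x i) := fun _ => rfl
  have hpos_digit : ∀ i : ℕ, (2 : ℝ) < nicfX x (i + 1) →
      nicfDigit x (i + 1) ∈ ({2, 3, 4, 5} : Set ℤ) := by
    intro i hp
    obtain ⟨g1, g2, -⟩ := round_pos_branch hp (hμ (i + 1) (Nat.le_add_left 1 i))
    rw [hdigit] at *
    simp only [Set.mem_insert_iff, Set.mem_singleton_iff]
    omega
  have hneg_digit : ∀ i : ℕ, nicfX x (i + 1) < -2 →
      nicfDigit x (i + 1) ∈ ({-2, -3, -4, -5} : Set ℤ) := by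
    intro i hn
    obtain ⟨g1, g2, -⟩ := round_neg_branch hn (hμ (i + 1) (Nat.le_add_left 1 i))
    rw [hdigit] at *
    simp only [Set.mem_insert_iff, Set.mem_singleton_iff]
    omega
  refine ⟨⟨h0, h1⟩, ?_, ?_, ?_, ?_⟩
  · -- a₀ ∈ {0, 1}
    have hb := abs_sub_round x
    rw [abs_le] at hb
    rw [hdigit]
    show round (nicfX x 0) = 0 ∨ round (nicfX x 0) = 1
    have hxx : nicfX x 0 = x := rfl
    rw [hxx]
    have l1 : (-1 : ℝ) < (round x : ℝ) := by linarith
    have l2 : (round x : ℝ) < 2 := by linarith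
    have l1' : (-1 : ℤ) < round x := by exact_mod_cast l1
    have l2' : round x < 2 := by exact_mod_cast l2
    omega
  · -- a₀ = 0 → a₁ ∈ {2,3,4,5}
    intro ha _
    have ha' : (round (nicfX x 0) : ℝ) = 0 := by rw [← hdigit, ha]; norm_num
    have hp : 2 < nicfX x 1 := next_pos hx 0 (by rw [ha']; exact hx0)
    exact hpos_digit 0 hp
  · -- a₀ = 1 → a₁ ∈ {-2,-3,-4,-5}
    intro ha _
    have ha' : (round (nicfX x 0) : ℝ) = 1 := by rw [← hdigit, ha]; norm_num
    have hn : nicfX x 1 < -2 := next_neg hx 0 (by rw [ha']; exact hx1)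
    exact hneg_digit 0 hn
  · intro i hi _
    have hdb := digit_branch i hi
    refine ⟨?_, ?_, ?_, ?_, ?_⟩
    · simp only [Set.mem_insert_iff, Set.mem_singleton_iff]
      rcases hdb with ⟨-, g1, g2, -⟩ | ⟨-, g1, g2, -⟩ <;> omega
    · intro ha _
      rcases hdb with ⟨hy, -, -, -⟩ | ⟨-, -, g2, -⟩
      · have ha' : (round (nicfX x i) : ℝ) = 2 := by rw [← hdigit, ha]; norm_num
        exact hpos_digit i (next_pos hx i (by rw [ha']; exact hy))
      · omega
    · intro ha _
      rcases hdb with ⟨-, g1, -, -⟩ | ⟨hy, -, -, -⟩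
      · omega
      · have ha' : (round (nicfX x i) : ℝ) = -2 := by rw [← hdigit, ha]; norm_num
        exact hneg_digit i (next_neg hx i (by rw [ha']; linarith))
    · intro ha _
      rcases hdb with ⟨-, -, -, hy5⟩ | ⟨-, -, g2, -⟩
      · have ha' : (round (nicfX x i) : ℝ) = 5 := by rw [← hdigit, ha]; norm_num
        exact hneg_digit i (next_neg hx i (by rw [ha']; exact hy5))
      · omega
    · intro ha _
      rcases hdb with ⟨-, g1, -, -⟩ | ⟨-, -, -, hy5⟩
      · omega
      · have ha' : (round (nicfX x i) : ℝ) = -5 := by rw [← hdigit, ha]; norm_num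
        exact hpos_digit i (next_pos hx i (by rw [ha']; exact hy5))
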